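/- For the Matérn spectral density κ̂_d(r) = σ² 2^d π^{d/2} (2ν)^ν (Γ(ν+d/2)/Γ(ν)) (2ν + (2πr)²)^{−(ν+d/2)}, and for the ordering k(1), k(2), … of ℤ^d by nondecreasing Euclidean norm, the values ρ̂(ξ_{k(j)}) with ξ_k = k/(2ℓ) satisfy 0 < ρ̂(ξ_{k(j)}) ≤ C λ^{−2ν} (νℓ²)^{ν+d/2} j^{−(1+2ν/d)} for all j ≥ 2, where C depends only on d. -/

import Mathlib

set_option maxHeartbeats 1000000

open Real


lemma rpow_neg_base_mono {x y c : ℝ} (hx : 0 < x) (hxy : x ≤ y) (hc : 0 ≤ c) :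
    y ^ (-c) ≤ x ^ (-c) := by
  rw [Real.rpow_neg (by linarith), Real.rpow_neg hx.le]
  exact inv_anti₀ (Real.rpow_pos_of_pos hx c) (Real.rpow_le_rpow hx.le hxy hc)

lemma gamma_half_step {y : ℝ} (hy : 0 < y) :
    Real.Gamma (y + 1/2) ≤ Real.Gamma y * Real.sqrt y := by
  have hy1 : (0:ℝ) < y + 1 := by linarith
  have hΓy := Real.Gamma_pos_of_pos hy
  have hΓy1 := Real.Gamma_pos_of_pos hy1
  have hΓh := Real.Gamma_pos_of_pos (show (0:ℝ) < y + 1/2 by linarith)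
  have h2 : Real.log (Real.Gamma (y + 1/2)) ≤
      (1/2) * Real.log (Real.Gamma y) + (1/2) * Real.log (Real.Gamma (y+1)) := by
    have h := Real.convexOn_log_Gamma.2 (Set.mem_Ioi.2 hy) (Set.mem_Ioi.2 hy1)
      (by norm_num : (0:ℝ) ≤ 1/2) (by norm_num : (0:ℝ) ≤ 1/2) (by norm_num)
    simp only [Function.comp, smul_eq_mul] at h
    rw [show (1/2 : ℝ) * y + (1/2) * (y+1) = y + 1/2 by ring] at h
    exact h
  have h3 : Real.Gamma (y + 1/2) ≤ Real.sqrt (Real.Gamma y) * Real.sqrt (Real.Gamma (y+1)) := by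
    calc Real.Gamma (y + 1/2) = Real.exp (Real.log (Real.Gamma (y + 1/2))) := (Real.exp_log hΓh).symm
      _ ≤ Real.exp ((1/2) * Real.log (Real.Gamma y) + (1/2) * Real.log (Real.Gamma (y+1))) :=
          Real.exp_le_exp.2 h2
      _ = Real.sqrt (Real.Gamma y) * Real.sqrt (Real.Gamma (y+1)) := by
          rw [Real.exp_add]
          congr 1
          · rw [Real.sqrt_eq_rpow, Real.rpow_def_of_pos hΓy]; ring_nf
          · rw [Real.sqrt_eq_rpow, Real.rpow_def_of_pos hΓy1]; ring_nf
  calc Real.Gamma (y + 1/2) ≤ Real.sqrt (Real.Gamma y) * Real.sqrt (Real.Gamma (y+1)) := h3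
    _ = Real.Gamma y * Real.sqrt y := by
        rw [← Real.sqrt_mul hΓy.le, Real.Gamma_add_one hy.ne',
          show Real.Gamma y * (y * Real.Gamma y) = (Real.Gamma y)^2 * y by ring,
          Real.sqrt_mul (sq_nonneg _), Real.sqrt_sq hΓy.le]

lemma gamma_step_nat (n : ℕ) {x : ℝ} (hx : 1/2 ≤ x) :
    Real.Gamma (x + n) ≤ Real.Gamma x * ((2*(n:ℝ)+1)*x) ^ n := by
  have hx0 : 0 < x := by linarith
  induction n with
  | zero => simp
  | succ n ih =>
    have hxn : (0:ℝ) < x + n := by positivity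
    have hn0 : (0:ℝ) ≤ n := Nat.cast_nonneg n
    have h1 : Real.Gamma (x + ((n:ℕ)+1:ℕ)) = (x + n) * Real.Gamma (x + n) := by
      rw [show (x + (((n:ℕ)+1:ℕ):ℝ) : ℝ) = (x + n) + 1 by push_cast; ring,
        Real.Gamma_add_one hxn.ne']
    rw [h1]
    have hΓ := Real.Gamma_pos_of_pos hx0
    have hb : (0:ℝ) ≤ (2*(n:ℝ)+1)*x := by positivity
    have hlt : x + (n:ℝ) ≤ (2*((n:ℝ)+1)+1)*x := by nlinarith
    have hpow : ((2*(n:ℝ)+1)*x) ^ n ≤ ((2*((n:ℝ)+1)+1)*x) ^ n := by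
      apply pow_le_pow_left₀ hb
      nlinarith
    calc (x + n) * Real.Gamma (x + n) ≤ (x + n) * (Real.Gamma x * ((2*(n:ℝ)+1)*x) ^ n) := by
          apply mul_le_mul_of_nonneg_left ih hxn.le
      _ ≤ ((2*((n:ℝ)+1)+1)*x) * (Real.Gamma x * ((2*((n:ℝ)+1)+1)*x) ^ n) := by
          apply mul_le_mul hlt (mul_le_mul_of_nonneg_left hpow hΓ.le) (by positivity) (by positivity)
      _ = Real.Gamma x * ((2*(((n:ℕ)+1:ℕ):ℝ)+1)*x) ^ ((n:ℕ)+1) := by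
          push_cast; ring

lemma gamma_ratio {d : ℕ} (hd : 1 ≤ d) {ν : ℝ} (hν : 1/2 ≤ ν) :
    Real.Gamma (ν + (d:ℝ)/2) ≤ Real.Gamma ν * (((d:ℝ)+1) * ν) ^ ((d:ℝ)/2) := by
  have hν0 : (0:ℝ) < ν := by linarith
  have hΓ := Real.Gamma_pos_of_pos hν0
  rcases Nat.even_or_odd d with ⟨n, rfl⟩ | ⟨n, rfl⟩
  · rw [show ((n+n:ℕ):ℝ) = 2*(n:ℝ) from by push_cast; ring,
      show (2*(n:ℝ))/2 = ((n:ℕ):ℝ) from by push_cast; ring, Real.rpow_natCast]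
    exact gamma_step_nat n hν
  · have hc : ((2*n+1:ℕ):ℝ) = 2*(n:ℝ)+1 := by push_cast; ring
    rw [hc]
    have hn0 : (0:ℝ) ≤ n := Nat.cast_nonneg n
    set b : ℝ := (2*(n:ℝ)+1+1) * ν with hb
    have hb0 : 0 < b := by positivity
    have hxm : (0:ℝ) < ν + n := by positivity
    have harg : ν + (2*(n:ℝ)+1)/2 = (ν + n) + 1/2 := by ring
    have hexp : b ^ ((2*(n:ℝ)+1)/2) = b ^ n * Real.sqrt b := by
      rw [Real.sqrt_eq_rpow, ← Real.rpow_natCast b n, ← Real.rpow_add hb0]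
      norm_num
      rw [show (2*(n:ℝ)+1)/2 = (n:ℝ) + 1/2 from by ring]
    rw [harg, hexp]
    have h1 : Real.Gamma ((ν + n) + 1/2) ≤ Real.Gamma (ν + n) * Real.sqrt (ν + n) :=
      gamma_half_step hxm
    have h2 : Real.Gamma (ν + n) ≤ Real.Gamma ν * ((2*(n:ℝ)+1)*ν) ^ n := gamma_step_nat n hν
    have h3 : ((2*(n:ℝ)+1)*ν) ^ n ≤ b ^ n := by
      apply pow_le_pow_left₀ (by positivity)
      nlinarith
    have h4 : Real.sqrt (ν + n) ≤ Real.sqrt b := by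
      apply Real.sqrt_le_sqrt
      nlinarith
    calc Real.Gamma ((ν + n) + 1/2) ≤ Real.Gamma (ν + n) * Real.sqrt (ν + n) := h1
      _ ≤ (Real.Gamma ν * ((2*(n:ℝ)+1)*ν) ^ n) * Real.sqrt (ν + n) := by
          apply mul_le_mul_of_nonneg_right h2 (Real.sqrt_nonneg _)
      _ ≤ (Real.Gamma ν * b ^ n) * Real.sqrt b := by
          apply mul_le_mul (mul_le_mul_of_nonneg_left h3 hΓ.le) h4 (Real.sqrt_nonneg _) (by positivity)
      _ = Real.Gamma ν * (b ^ n * Real.sqrt b) := by ring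

lemma count_bound {d : ℕ} (k : ℕ → (Fin d → ℤ)) (hinj : Function.Injective k)
    (hmono : Monotone fun j => Real.sqrt (∑ i, ((k j i : ℝ)) ^ 2)) (j : ℕ) :
    ((j+1 : ℕ) : ℝ) ≤ (2 * Real.sqrt (∑ i, ((k j i : ℝ)) ^ 2) + 1) ^ d := by
  set r := Real.sqrt (∑ i, ((k j i : ℝ)) ^ 2) with hrdef
  have hr0 : 0 ≤ r := Real.sqrt_nonneg _
  set m : ℤ := ⌊r⌋ with hm
  have hm0 : (0:ℤ) ≤ m := Int.floor_nonneg.2 hr0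
  have hsub : ∀ i ≤ j, ∀ t, k i t ∈ Finset.Icc (-m) m := by
    intro i hij t
    have h1 : Real.sqrt (∑ i', ((k i i' : ℝ)) ^ 2) ≤ r := hmono hij
    have hsn : 0 ≤ ∑ i', ((k i i' : ℝ))^2 := Finset.sum_nonneg fun _ _ => sq_nonneg _
    have h2 : ((k i t : ℝ))^2 ≤ ∑ i', ((k i i' : ℝ))^2 :=
      Finset.single_le_sum (f := fun i' => ((k i i' : ℝ))^2)
        (fun _ _ => sq_nonneg _) (Finset.mem_univ t)
    have h3 : ((k i t : ℝ))^2 ≤ r^2 := by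
      have hs := Real.sq_sqrt hsn
      nlinarith [Real.sqrt_nonneg (∑ i', ((k i i' : ℝ))^2)]
    have h4 : |((k i t : ℝ))| ≤ r := by
      nlinarith [sq_abs ((k i t : ℝ)), abs_nonneg ((k i t : ℝ))]
    have h5 : |k i t| ≤ m := by
      apply Int.le_floor.2
      rw [show ((|k i t| : ℤ) : ℝ) = |((k i t : ℤ) : ℝ)| from by push_cast; ring]
      exact h4
    rw [Finset.mem_Icc]
    constructor <;> [exact neg_le_of_abs_le h5; exact le_of_abs_le h5]
  have hcard : (j+1 : ℕ) ≤ ((2*m+1).toNat)^d := by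
    have hmaps : ∀ i ∈ Finset.range (j+1), k i ∈
        Fintype.piFinset (fun _ : Fin d => Finset.Icc (-m) m) := by
      intro i hi
      rw [Fintype.mem_piFinset]
      exact fun t => hsub i (Nat.lt_succ_iff.1 (Finset.mem_range.1 hi)) t
    have h := Finset.card_le_card_of_injOn k hmaps (hinj.injOn)
    rw [Finset.card_range, Fintype.card_piFinset] at h
    simpa [Int.card_Icc, show m + 1 - (-m) = 2*m+1 by ring] using h
  have hc2 : (((2*m+1).toNat : ℤ) : ℝ) = 2*(m:ℝ)+1 := by
    rw [Int.toNat_of_nonneg (by omega)]; push_cast; ring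
  calc ((j+1:ℕ):ℝ) ≤ ((((2*m+1).toNat)^d : ℕ) : ℝ) := by exact_mod_cast hcard
    _ = (2*(m:ℝ)+1)^d := by push_cast at hc2 ⊢; rw [hc2]
    _ ≤ (2*r+1)^d := by
        apply pow_le_pow_left₀ (by positivity)
        have := Int.floor_le r
        linarith

/-- Matérn spectral density (σ² = 1):
κ̂_d(r) = 2^d π^{d/2} (2ν)^ν (Γ(ν+d/2)/Γ(ν)) (2ν + (2πr)²)^{-(ν+d/2)}. -/
noncomputable def maternHat (d : ℕ) (ν r : ℝ) : ℝ :=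
  2 ^ d * Real.pi ^ ((d : ℝ) / 2) * (2 * ν) ^ ν *
    (Real.Gamma (ν + (d : ℝ) / 2) / Real.Gamma ν) *
    (2 * ν + (2 * Real.pi * r) ^ 2) ^ (-(ν + (d : ℝ) / 2))

theorem stmt18 (d : ℕ) (hd : 1 ≤ d) :
    ∃ C : ℝ, 0 < C ∧
      ∀ ν : ℝ, 1 / 2 ≤ ν → ∀ lam : ℝ, 0 < lam → lam ≤ 1 → ∀ ℓ : ℝ, 1 ≤ ℓ →
      ∀ k : ℕ → (Fin d → ℤ), Function.Bijective k → k 0 = 0 →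
        (Monotone fun j => Real.sqrt (∑ i, ((k j i : ℝ)) ^ 2)) →
      ∀ j : ℕ, 1 ≤ j →
        0 < lam ^ d * maternHat d ν (lam * Real.sqrt (∑ i, ((k j i : ℝ)) ^ 2) / (2 * ℓ)) ∧
        lam ^ d * maternHat d ν (lam * Real.sqrt (∑ i, ((k j i : ℝ)) ^ 2) / (2 * ℓ))
          ≤ C * lam ^ (-(2 * ν)) * (ν * ℓ ^ 2) ^ (ν + (d : ℝ) / 2) *
              ((j + 1 : ℕ) : ℝ) ^ (-(1 + 2 * ν / d)) := by
  have hdR : (1:ℝ) ≤ (d:ℝ) := by exact_mod_cast hd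
  have hd0 : (0:ℝ) < (d:ℝ) := by linarith
  set C1 : ℝ := ((d:ℝ)+1)^d * 242^(243+d) with hC1
  have hC1pos : 0 < C1 := by positivity
  refine ⟨2^d * Real.pi ^ ((d:ℝ)/2) * C1, by positivity, ?_⟩
  intro ν hν lam hlam0 hlam1 ℓ hℓ k hk hk0 hmono j hj
  have hν0 : (0:ℝ) < ν := by linarith
  have hℓ0 : (0:ℝ) < ℓ := by linarith
  have hΓν := Real.Gamma_pos_of_pos hν0
  have hΓνd := Real.Gamma_pos_of_pos (show (0:ℝ) < ν + (d:ℝ)/2 by positivity)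
  set r : ℝ := Real.sqrt (∑ i, ((k j i : ℝ)) ^ 2) with hrdef
  -- r ≥ 1
  have hr1 : 1 ≤ r := by
    have hkj : k j ≠ 0 := by
      intro h
      have : j = 0 := hk.injective (h.trans hk0.symm)
      omega
    obtain ⟨t, ht⟩ : ∃ t, k j t ≠ 0 := by
      by_contra h; push_neg at h; exact hkj (funext h)
    have h1 : (1:ℝ) ≤ ((k j t : ℝ))^2 := by
      have : (1:ℤ) ≤ (k j t)^2 := by
        rcases lt_or_gt_of_ne ht with h|h <;> nlinarith
      exact_mod_cast this
    have hsum : (1:ℝ) ≤ ∑ i, ((k j i : ℝ))^2 :=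
      le_trans h1 (Finset.single_le_sum (f := fun i => ((k j i : ℝ))^2)
        (fun _ _ => sq_nonneg _) (Finset.mem_univ t))
    calc (1:ℝ) = Real.sqrt 1 := Real.sqrt_one.symm
      _ ≤ r := Real.sqrt_le_sqrt hsum
  have hr0 : (0:ℝ) < r := by linarith
  have hmat_pos : 0 < maternHat d ν (lam * r / (2 * ℓ)) := by
    unfold maternHat
    positivity
  refine ⟨by positivity, ?_⟩
  -- setup
  set N : ℝ := ((j+1 : ℕ) : ℝ) with hN
  have hNpos : (0:ℝ) < N := by positivity
  set M : ℝ := N ^ ((1:ℝ)/(d:ℝ)) with hM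
  have hMpos : 0 < M := Real.rpow_pos_of_pos hNpos _
  set s : ℝ := lam / ℓ with hs
  have hs0 : 0 < s := div_pos hlam0 hℓ0
  have hs1 : s ≤ 1 := by rw [hs, div_le_one hℓ0]; linarith
  set u : ℝ := (s*M)^2 with hu
  have hu0 : 0 < u := by positivity
  set α : ℝ := ν + (d:ℝ)/2 with hα
  have hα0 : (0:ℝ) < α := by rw [hα]; positivity
  have hα1 : (1:ℝ) ≤ α := by rw [hα]; linarith
  -- counting
  have hNle : N ≤ (2*r+1)^d := count_bound k hk.injective hmono j
  have hMle : M ≤ 2*r+1 := by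
    have h1 : M ≤ ((2*r+1)^d) ^ ((1:ℝ)/(d:ℝ)) :=
      Real.rpow_le_rpow hNpos.le hNle (by positivity)
    have h2 : ((2*r+1)^d : ℝ) ^ ((1:ℝ)/(d:ℝ)) = 2*r+1 := by
      rw [← Real.rpow_natCast (2*r+1) d, ← Real.rpow_mul (by positivity)]
      rw [mul_one_div, div_self hd0.ne', Real.rpow_one]
    rw [h2] at h1; exact h1
  -- Gamma quotient bound
  have hΓq : Real.Gamma (ν + (d:ℝ)/2) / Real.Gamma ν ≤ (((d:ℝ)+1)*ν) ^ ((d:ℝ)/2) := by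
    rw [div_le_iff₀ hΓν, mul_comm]
    exact gamma_ratio hd hν
  have hΓq0 : 0 < Real.Gamma (ν + (d:ℝ)/2) / Real.Gamma ν := div_pos hΓνd hΓν
  -- easy bound
  have hEB : ∀ B : ℝ, 0 ≤ B → (2*ν)^ν * (Real.Gamma (ν + (d:ℝ)/2) / Real.Gamma ν) *
      (2*ν + B)^(-α) ≤ ((d:ℝ)+1)^d := by
    intro B hB0
    have h2ν : (0:ℝ) < 2*ν := by linarith
    have e1 : (2*ν + B)^(-α) ≤ (2*ν)^(-α) :=
      rpow_neg_base_mono h2ν (le_add_of_nonneg_right hB0) hα0.le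
    have hA0 : (0:ℝ) ≤ ((d:ℝ)+1)*ν := by positivity
    calc (2*ν)^ν * (Real.Gamma (ν + (d:ℝ)/2) / Real.Gamma ν) * (2*ν+B)^(-α)
        ≤ (2*ν)^ν * (((d:ℝ)+1)*ν)^((d:ℝ)/2) * (2*ν)^(-α) := by
          apply mul_le_mul (mul_le_mul_of_nonneg_left hΓq (Real.rpow_pos_of_pos h2ν ν).le) e1
            (Real.rpow_pos_of_pos (by linarith) _).le (by positivity)
      _ = ((((d:ℝ)+1)*ν)/(2*ν))^((d:ℝ)/2) := by
          rw [show (2*ν)^ν * ((((d:ℝ)+1)*ν))^((d:ℝ)/2) * (2*ν)^(-α)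
            = ((((d:ℝ)+1)*ν))^((d:ℝ)/2) * ((2*ν)^ν * (2*ν)^(-α)) by ring,
            ← Real.rpow_add h2ν, show ν + -α = -((d:ℝ)/2) by rw [hα]; ring,
            Real.rpow_neg h2ν.le, ← div_eq_mul_inv, ← Real.div_rpow hA0 h2ν.le]
      _ = (((d:ℝ)+1)/2)^((d:ℝ)/2) := by
          rw [show ((((d:ℝ)+1)*ν))/(2*ν) = ((d:ℝ)+1)/2 by field_simp]
      _ ≤ ((d:ℝ)+1)^((d:ℝ)/2) :=
          Real.rpow_le_rpow (by positivity) (by linarith) (by positivity)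
      _ ≤ ((d:ℝ)+1)^((d:ℝ)) := Real.rpow_le_rpow_of_exponent_le (by linarith) (by linarith)
      _ = ((d:ℝ)+1)^d := Real.rpow_natCast _ d
  -- key inequality
  have hKEY : (2*ν)^ν * (Real.Gamma (ν + (d:ℝ)/2) / Real.Gamma ν) *
      (2*ν + (Real.pi*(s*r))^2)^(-α) ≤ C1 * (ν^α * u^(-α)) := by
    have hdd : ((d:ℝ)+1)^d ≤ C1 := by
      rw [hC1]
      exact le_mul_of_one_le_right (by positivity) (one_le_pow₀ (by norm_num))
    rcases le_or_gt (2*u) ν with hcase | hcase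
    · -- Case I : 2u ≤ ν
      have h5 : (1:ℝ) ≤ ν^α * u^(-α) := by
        have huν : u ≤ ν := by nlinarith
        have hle := Real.rpow_le_rpow hu0.le huν hα0.le
        have hupos := Real.rpow_pos_of_pos hu0 α
        rw [Real.rpow_neg hu0.le]
        calc (1:ℝ) = u^α * (u^α)⁻¹ := (mul_inv_cancel₀ hupos.ne').symm
          _ ≤ ν^α * (u^α)⁻¹ := mul_le_mul_of_nonneg_right hle (inv_nonneg.2 hupos.le)
      calc (2*ν)^ν * (Real.Gamma (ν + (d:ℝ)/2) / Real.Gamma ν) *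
            (2*ν + (Real.pi*(s*r))^2)^(-α)
          ≤ ((d:ℝ)+1)^d := hEB _ (sq_nonneg _)
        _ ≤ C1 := hdd
        _ = C1 * 1 := (mul_one _).symm
        _ ≤ C1 * (ν^α * u^(-α)) := mul_le_mul_of_nonneg_left h5 hC1pos.le
    rcases le_or_gt 5 r with hr5 | hr5
    · -- Case II : r ≥ 5
      have hpisq : 2*(2*r+1)^2 ≤ Real.pi^2 * r^2 := by
        have hπ : (9.85:ℝ) ≤ Real.pi^2 := by
          nlinarith [Real.pi_gt_d2, sq_nonneg (Real.pi - 3.14)]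
        nlinarith [hπ, sq_nonneg (r-5), sq_nonneg r]
      have hsM : s*M ≤ s*(2*r+1) := mul_le_mul_of_nonneg_left hMle hs0.le
      have hu2 : u ≤ (s*(2*r+1))^2 := by
        rw [hu]; exact pow_le_pow_left₀ (by positivity) hsM 2
      have hBl : 2*u ≤ (Real.pi*(s*r))^2 := by
        nlinarith [mul_le_mul_of_nonneg_left hpisq (sq_nonneg s)]
      have e1 : (2*ν + (Real.pi*(s*r))^2)^(-α) ≤ (2*(ν+u))^(-α) :=
        rpow_neg_base_mono (by positivity) (by linarith) hα0.le
      have e3 : (ν+u)^(-α) ≤ u^(-α) := rpow_neg_base_mono hu0 (by linarith) hα0.le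
      have e4 : (2*ν + (Real.pi*(s*r))^2)^(-α) ≤ 2^(-α) * u^(-α) := by
        rw [Real.mul_rpow (by norm_num : (0:ℝ) ≤ 2) (by positivity : (0:ℝ) ≤ ν+u)] at e1
        calc (2*ν + (Real.pi*(s*r))^2)^(-α) ≤ 2^(-α) * (ν+u)^(-α) := e1
          _ ≤ 2^(-α) * u^(-α) :=
              mul_le_mul_of_nonneg_left e3 (Real.rpow_nonneg (by norm_num) _)
      have h2le : (2:ℝ)^(ν + -α) ≤ 1 :=
        Real.rpow_le_one_of_one_le_of_nonpos (by norm_num) (by rw [hα]; linarith)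
      have hdle : (((d:ℝ)+1))^((d:ℝ)/2) ≤ ((d:ℝ)+1)^d := by
        rw [← Real.rpow_natCast ((d:ℝ)+1) d]
        exact Real.rpow_le_rpow_of_exponent_le (by linarith) (by linarith)
      calc (2*ν)^ν * (Real.Gamma (ν + (d:ℝ)/2) / Real.Gamma ν) *
            (2*ν + (Real.pi*(s*r))^2)^(-α)
          ≤ (2*ν)^ν * (((d:ℝ)+1)*ν)^((d:ℝ)/2) * (2^(-α) * u^(-α)) := by
            apply mul_le_mul
              (mul_le_mul_of_nonneg_left hΓq (Real.rpow_pos_of_pos (by linarith) ν).le) e4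
              (Real.rpow_pos_of_pos (by positivity) _).le (by positivity)
        _ = ((2:ℝ)^(ν + -α)) * ((((d:ℝ)+1))^((d:ℝ)/2) * ν^(ν + (d:ℝ)/2)) * u^(-α) := by
            rw [Real.mul_rpow (by norm_num : (0:ℝ) ≤ 2) hν0.le,
                Real.mul_rpow (by positivity : (0:ℝ) ≤ (d:ℝ)+1) hν0.le,
                Real.rpow_add (by norm_num : (0:ℝ) < 2), Real.rpow_add hν0]
            ring
        _ ≤ 1 * ((((d:ℝ)+1))^d * ν^(ν + (d:ℝ)/2)) * u^(-α) := by
            apply mul_le_mul_of_nonneg_right _ (Real.rpow_nonneg hu0.le _)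
            exact mul_le_mul h2le
              (mul_le_mul_of_nonneg_right hdle (Real.rpow_pos_of_pos hν0 _).le)
              (by positivity) (by norm_num)
        _ = (((d:ℝ)+1))^d * (ν^α * u^(-α)) := by rw [hα]; ring
        _ ≤ C1 * (ν^α * u^(-α)) := mul_le_mul_of_nonneg_right hdd (by positivity)
    · -- Case III : ν < 2u, r < 5
      have hsM11 : s*M ≤ 11 := by
        calc s*M ≤ 1*(2*r+1) :=
            mul_le_mul hs1 hMle (by positivity) (by norm_num)
          _ ≤ 11 := by linarith
      have hu121 : u ≤ 121 := by rw [hu]; nlinarith [mul_pos hs0 hMpos]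
      have hν242 : ν ≤ 242 := by linarith
      have hq : ν^α * u^(-α) = (ν/u)^α := by
        rw [Real.div_rpow hν0.le hu0.le, Real.rpow_neg hu0.le, div_eq_mul_inv]
      have h6 : ((1:ℝ)/242)^(242+d) ≤ ν^α * u^(-α) := by
        rw [hq]
        calc ((1:ℝ)/242)^(242+d) = ((1:ℝ)/242)^(((242+d:ℕ)):ℝ) :=
            (Real.rpow_natCast _ _).symm
          _ ≤ ((1:ℝ)/242)^α := by
              apply Real.rpow_le_rpow_of_exponent_ge (by norm_num) (by norm_num)
              rw [hα]; push_cast; linarith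
          _ ≤ (ν/u)^α := by
              apply Real.rpow_le_rpow (by norm_num) _ hα0.le
              rw [div_le_div_iff₀ (by norm_num) hu0]
              linarith
      have h7 : C1 * ((1:ℝ)/242)^(242+d) = ((d:ℝ)+1)^d * 242 := by
        rw [hC1, show (243+d) = (242+d)+1 by omega, pow_succ]
        field_simp
        ring_nf; rw [← mul_pow]; norm_num
      calc (2*ν)^ν * (Real.Gamma (ν + (d:ℝ)/2) / Real.Gamma ν) *
            (2*ν + (Real.pi*(s*r))^2)^(-α)
          ≤ ((d:ℝ)+1)^d := hEB _ (sq_nonneg _)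
        _ ≤ ((d:ℝ)+1)^d * 242 := le_mul_of_one_le_right (by positivity) (by norm_num)
        _ = C1 * ((1:ℝ)/242)^(242+d) := h7.symm
        _ ≤ C1 * (ν^α * u^(-α)) := mul_le_mul_of_nonneg_left h6 hC1pos.le
  -- main equality for RHS
  have hR : lam ^ (-(2*ν)) * (ν*ℓ^2)^α * N^(-(1+2*ν/(d:ℝ))) = lam^d * (ν^α * u^(-α)) := by
    have hνℓ : (0:ℝ) < ν*ℓ^2 := by positivity
    have hP1 : (0:ℝ) < lam ^ (-(2*ν)) * (ν*ℓ^2)^α * N^(-(1+2*ν/(d:ℝ))) := by positivity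
    have hP2 : (0:ℝ) < lam^d * (ν^α * u^(-α)) := by positivity
    have ne1 : lam ^ (-(2*ν)) ≠ 0 := (Real.rpow_pos_of_pos hlam0 _).ne'
    have ne2 : (ν*ℓ^2)^α ≠ 0 := (Real.rpow_pos_of_pos hνℓ _).ne'
    have ne3 : N^(-(1+2*ν/(d:ℝ))) ≠ 0 := (Real.rpow_pos_of_pos hNpos _).ne'
    have ne4 : lam^d ≠ 0 := by positivity
    have ne5 : ν^α ≠ 0 := (Real.rpow_pos_of_pos hν0 _).ne'
    have ne6 : u^(-α) ≠ 0 := (Real.rpow_pos_of_pos hu0 _).ne'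
    have ne7 : ν ≠ 0 := hν0.ne'
    have ne8 : ℓ^2 ≠ 0 := by positivity
    have ne9 : lam ^ (-(2*ν)) * (ν*ℓ^2)^α ≠ 0 := mul_ne_zero ne1 ne2
    have ne10 : ν^α * u^(-α) ≠ 0 := mul_ne_zero ne5 ne6
    have hlu : Real.log u = 2*((Real.log lam - Real.log ℓ) + (1/(d:ℝ)) * Real.log N) := by
      rw [hu, Real.log_pow, Real.log_mul hs0.ne' hMpos.ne', hs, hM,
        Real.log_div hlam0.ne' hℓ0.ne', Real.log_rpow hNpos]
      push_cast; ring
    apply Real.log_injOn_pos (Set.mem_Ioi.2 hP1) (Set.mem_Ioi.2 hP2)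
    rw [Real.log_mul ne9 ne3, Real.log_mul ne1 ne2, Real.log_rpow hlam0,
      Real.log_rpow hνℓ, Real.log_rpow hNpos, Real.log_mul ne7 ne8, Real.log_pow,
      Real.log_mul ne4 ne10, Real.log_mul ne5 ne6, Real.log_pow,
      Real.log_rpow hν0, Real.log_rpow hu0, hlu, hα]
    field_simp
    ring
  -- argument rewrite
  have hB : (2 * Real.pi * (lam * r / (2 * ℓ)))^2 = (Real.pi*(s*r))^2 := by
    rw [hs]; field_simp
  calc lam ^ d * maternHat d ν (lam * r / (2 * ℓ))
      = (2^d * Real.pi^((d:ℝ)/2) * lam^d) *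
        ((2*ν)^ν * (Real.Gamma (ν + (d:ℝ)/2) / Real.Gamma ν) *
          (2*ν + (Real.pi*(s*r))^2)^(-α)) := by
        unfold maternHat
        rw [hB, ← hα]
        ring
    _ ≤ (2^d * Real.pi^((d:ℝ)/2) * lam^d) * (C1 * (ν^α * u^(-α))) := by
        apply mul_le_mul_of_nonneg_left hKEY (by positivity)
    _ = 2^d * Real.pi^((d:ℝ)/2) * C1 * lam ^ (-(2*ν)) * (ν*ℓ^2)^α * N^(-(1+2*ν/(d:ℝ))) := by
        rw [show (2:ℝ)^d * Real.pi^((d:ℝ)/2) * C1 * lam ^ (-(2*ν)) * (ν*ℓ^2)^α * N^(-(1+2*ν/(d:ℝ)))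
          = (2^d * Real.pi^((d:ℝ)/2) * C1) * (lam ^ (-(2*ν)) * (ν*ℓ^2)^α * N^(-(1+2*ν/(d:ℝ)))) by ring,
          hR]
        ring
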